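/- Let A = ⊕_{n≥0} A_n be a graded self-adjoint Hopf algebra over ℤ with A_0 ≅ ℤ (connected), each A_n free of finite rank with an orthogonal basis, and with the form positive definite on each graded piece. Then the map φ : A ⊗ A → End_ℤ(A) given by φ(x ⊗ y) = m_x ∘ Δ_y is injective, where m_x is multiplication by x and Δ_y is its graded adjoint. -/

import Mathlib

open TensorProduct

/-- **Injectivity of the Heisenberg-double action map for a PSH algebra.**
`A = ⊕ₙ Aₙ` is a graded connected self-adjoint Hopf algebra over `ℤ` (grading `𝒜` with
`𝒜 0 = ℤ·1`), each graded piece is spanned by a finite orthogonal basis, the bilinear form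
`B` is positive definite, pairs distinct graded pieces to zero, and makes multiplication
and comultiplication adjoint; `D x = Δ_x` is the adjoint of multiplication by `x`.  Then
the map `φ : A ⊗ A → End_ℤ(A)`, `φ(x ⊗ y) = m_x ∘ Δ_y`, is injective. -/
theorem psh_heisenberg_action_injective
    {A : Type*} [CommRing A]
    (𝒜 : ℕ → Submodule ℤ A) [GradedRing 𝒜]
    -- the comultiplication, an algebra homomorphism (the Hopf axiom)
    (comul : A →ₗ[ℤ] A ⊗[ℤ] A)
    (hcomul_mul : ∀ x y : A, comul (x * y) = comul x * comul y)
    (hcomul_one : comul 1 = 1)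
    -- connectedness : the degree-zero part is spanned by the unit
    (hconn : ∀ x ∈ 𝒜 0, ∃ n : ℤ, x = n • (1 : A))
    (B : LinearMap.BilinForm ℤ A)
    -- each grade has a finite orthogonal basis
    (hbasis : ∀ n : ℕ, ∃ s : Finset A, (↑s : Set A) ⊆ (𝒜 n : Set A) ∧
      Submodule.span ℤ (↑s : Set A) = 𝒜 n ∧
      (∀ x y : A, x ∈ s → y ∈ s → x ≠ y → B x y = 0) ∧
      LinearIndependent ℤ (fun x : { a // a ∈ s } => (x : A)))
    -- distinct grades are orthogonal
    (horth : ∀ {m n : ℕ}, m ≠ n → ∀ x ∈ 𝒜 m, ∀ y ∈ 𝒜 n, B x y = 0)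
    -- positivity of the form
    (hpos : ∀ x : A, x ≠ 0 → 0 < B x x)
    -- multiplication and comultiplication are adjoint
    (hadj : ∀ x y z : A, B (x * y) z = B.tmul B (x ⊗ₜ[ℤ] y) (comul z))
    (D : A →ₗ[ℤ] A →ₗ[ℤ] A)
    (hD : ∀ x z u : A, B (D x z) u = B z (x * u)) :
    Function.Injective
      (TensorProduct.lift
        ((LinearMap.mul ℤ (Module.End ℤ A)).compl₁₂
          (Algebra.lmul ℤ A).toLinearMap D)) := by
  classical
  by_cases htriv : (1 : A) = 0
  · have hsub : Subsingleton A := subsingleton_of_zero_eq_one htriv.symm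
    have hz : ∀ t : A ⊗[ℤ] A, t = 0 := by
      intro t
      induction t using TensorProduct.induction_on with
      | zero => rfl
      | tmul x y => rw [Subsingleton.elim x 0, TensorProduct.zero_tmul]
      | add x y hx hy => rw [hx, hy, add_zero]
    intro a b _
    rw [hz a, hz b]
  -- nondegeneracy
  have hnd : ∀ x : A, (∀ u : A, B x u = 0) → x = 0 := by
    intro x hx
    by_contra h
    exact absurd (hx x) (ne_of_gt (hpos x h))
  -- torsion-freeness
  have htf : ∀ (n : ℤ) (x : A), n ≠ 0 → n • x = 0 → x = 0 := by
    intro n x hn hnx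
    by_contra h
    have h1 : 0 < B x x := hpos x h
    have h2 : B (n • x) (n • x) = n * (n * B x x) := by
      rw [LinearMap.map_smul₂, map_smul, smul_eq_mul, smul_eq_mul]
    rw [hnx] at h2
    simp only [map_zero, LinearMap.zero_apply] at h2
    have h3 : 0 < n * n := mul_self_pos.mpr hn
    nlinarith
  -- B 1 1 = 1
  have hB11 : B 1 1 = 1 := by
    have h := hadj 1 1 1
    rw [hcomul_one, one_mul, Algebra.TensorProduct.one_def,
      LinearMap.BilinForm.tensorDistrib_tmul, smul_eq_mul] at h
    have hp : 0 < B 1 1 := hpos 1 htriv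
    exact mul_left_cancel₀ (ne_of_gt hp) (by linarith)
  -- pairing against a homogeneous element only sees one component
  have hcomp : ∀ (m : ℕ) (z : A), z ∈ 𝒜 m → ∀ u : A,
      B z u = B z (DirectSum.decompose 𝒜 u m : A) := by
    intro m z hz u
    conv_lhs => rw [← DirectSum.sum_support_decompose 𝒜 u]
    rw [map_sum]
    refine Finset.sum_eq_single m
      (fun k _ hk => horth (Ne.symm hk) z hz _ (SetLike.coe_mem _)) ?_
    intro hm
    rw [DFinsupp.notMem_support_iff.mp hm]
    simp
  -- low components of b * u vanish when b is homogeneous of higher degree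
  have hmulhigh : ∀ (n : ℕ) (b : A), b ∈ 𝒜 n → ∀ (u : A) (m : ℕ), m < n →
      (DirectSum.decompose 𝒜 (b * u) m : A) = 0 := by
    intro n b hb u m hm
    conv_lhs => rw [← DirectSum.sum_support_decompose 𝒜 u]
    rw [← GradedRing.proj_apply, Finset.mul_sum, map_sum]
    refine Finset.sum_eq_zero fun k _ => ?_
    rw [GradedRing.proj_apply,
      DirectSum.decompose_of_mem_ne 𝒜 (SetLike.mul_mem_graded hb (SetLike.coe_mem _))
        (show n + k ≠ m by omega)]
  -- the degree-m component of b * u for b of degree m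
  have hmulsame : ∀ (m : ℕ) (b : A), b ∈ 𝒜 m → ∀ u : A,
      (DirectSum.decompose 𝒜 (b * u) m : A) = b * (DirectSum.decompose 𝒜 u 0 : A) := by
    intro m b hb u
    conv_lhs => rw [← DirectSum.sum_support_decompose 𝒜 u]
    rw [← GradedRing.proj_apply, Finset.mul_sum, map_sum]
    rw [Finset.sum_eq_single 0 ?_ ?_]
    · rw [GradedRing.proj_apply, DirectSum.decompose_of_mem_same 𝒜]
      have := SetLike.mul_mem_graded hb (SetLike.coe_mem (DirectSum.decompose 𝒜 u 0))
      simpa using this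
    · intro k _ hk
      rw [GradedRing.proj_apply,
        DirectSum.decompose_of_mem_ne 𝒜 (SetLike.mul_mem_graded hb (SetLike.coe_mem _))
          (show m + k ≠ m by omega)]
    · intro h0
      rw [DFinsupp.notMem_support_iff.mp h0]
      simp
  -- D b z vanishes when deg z < deg b
  have hDhigh : ∀ (n : ℕ) (b : A), b ∈ 𝒜 n → ∀ (m : ℕ) (z : A), z ∈ 𝒜 m → m < n →
      D b z = 0 := by
    intro n b hb m z hz hmn
    refine hnd _ fun u => ?_
    rw [hD, hcomp m z hz (b * u), hmulhigh n b hb u m hmn, map_zero]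
  -- B 1 u computes the degree-zero coefficient
  have hB1 : ∀ (u : A) (c : ℤ), (DirectSum.decompose 𝒜 u 0 : A) = c • 1 → B 1 u = c := by
    intro u c hcu
    rw [hcomp 0 1 (SetLike.one_mem_graded 𝒜) u, hcu, map_smul, smul_eq_mul, hB11, mul_one]
  -- D b z for b, z of the same degree
  have hDeq : ∀ (m : ℕ) (b z : A), b ∈ 𝒜 m → z ∈ 𝒜 m → D b z = B z b • (1 : A) := by
    intro m b z hb hz
    have key : ∀ u : A, B (D b z - B z b • (1 : A)) u = 0 := by
      intro u
      obtain ⟨cu, hcu⟩ := hconn _ (SetLike.coe_mem (DirectSum.decompose 𝒜 u 0))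
      rw [map_sub, LinearMap.sub_apply, hD, hcomp m z hz (b * u), hmulsame m b hb u, hcu,
        mul_smul_comm, mul_one, map_smul, smul_eq_mul, map_smul, LinearMap.smul_apply,
        hB1 u cu hcu, smul_eq_mul]
      ring
    have := hnd _ key
    rwa [sub_eq_zero] at this
  -- set up the basis of A indexed by pairs (degree, basis element)
  choose S hSsub hSspan hSorth hSli using hbasis
  have hint : DirectSum.IsInternal 𝒜 := DirectSum.Decomposition.isInternal 𝒜
  have hli' : ∀ n, LinearIndependent ℤ
      (fun a : {a // a ∈ S n} => (⟨a, hSsub n a.2⟩ : 𝒜 n)) := by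
    intro n
    exact LinearIndependent.of_comp ((𝒜 n).subtype) (hSli n)
  have hspan' : ∀ n, ⊤ ≤ Submodule.span ℤ
      (Set.range (fun a : {a // a ∈ S n} => (⟨a, hSsub n a.2⟩ : 𝒜 n))) := by
    intro n
    have hmapeq : Submodule.map (𝒜 n).subtype
        (Submodule.span ℤ (Set.range (fun a : {a // a ∈ S n} => (⟨a, hSsub n a.2⟩ : 𝒜 n))))
        = 𝒜 n := by
      rw [Submodule.map_span, ← Set.range_comp]
      have : ((𝒜 n).subtype ∘ fun a : {a // a ∈ S n} => (⟨a, hSsub n a.2⟩ : 𝒜 n))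
          = fun a : {a // a ∈ S n} => (a : A) := rfl
      rw [this, Subtype.range_coe_subtype]
      have h2 : {x | x ∈ S n} = (↑(S n) : Set A) := rfl
      rw [h2, hSspan n]
    intro x _
    have hx : (x : A) ∈ Submodule.map (𝒜 n).subtype
        (Submodule.span ℤ (Set.range (fun a : {a // a ∈ S n} => (⟨a, hSsub n a.2⟩ : 𝒜 n)))) := by
      rw [hmapeq]; exact x.2
    obtain ⟨y, hy, hxy⟩ := hx
    have hyx : y = x := Subtype.ext hxy
    rwa [← hyx]
  let bV : ∀ n, Module.Basis {a // a ∈ S n} ℤ (𝒜 n) := fun n => Module.Basis.mk (hli' n) (hspan' n)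
  let c : Module.Basis (Σ n : ℕ, {a // a ∈ S n}) ℤ A := hint.collectedBasis bV
  have hc : ∀ j : (Σ n : ℕ, {a // a ∈ S n}), c j = (j.2 : A) := by
    intro j
    have := DirectSum.IsInternal.collectedBasis_coe hint bV
    rw [show c j = ((bV j.1) j.2 : A) from congrFun this j]
    simp [bV, Module.Basis.mk_apply]
  -- the tensor representation
  let e : (A ⊗[ℤ] A) ≃ₗ[ℤ] ((Σ n : ℕ, {a // a ∈ S n}) →₀ A) :=
    (TensorProduct.congr (LinearEquiv.refl ℤ A) c.repr).trans
      (TensorProduct.finsuppScalarRight ℤ ℤ A _)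
  have hesymm : ∀ (j : (Σ n : ℕ, {a // a ∈ S n})) (x : A),
      e.symm (Finsupp.single j x) = x ⊗ₜ[ℤ] c j := by
    intro j x
    have : e (x ⊗ₜ[ℤ] c j) = Finsupp.single j x := by
      ext i
      show (TensorProduct.finsuppScalarRight ℤ ℤ A _)
        ((TensorProduct.congr (LinearEquiv.refl ℤ A) c.repr) (x ⊗ₜ[ℤ] c j)) i = _
      simp [TensorProduct.congr_tmul, Module.Basis.repr_self,
        TensorProduct.finsuppScalarRight_apply_tmul_apply, Finsupp.single_apply]
    rw [← this, LinearEquiv.symm_apply_apply]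
  have hrep : ∀ f : (Σ n : ℕ, {a // a ∈ S n}) →₀ A,
      e.symm f = ∑ j ∈ f.support, f j ⊗ₜ[ℤ] c j := by
    intro f
    conv_lhs => rw [← Finsupp.sum_single f]
    rw [Finsupp.sum, map_sum]
    exact Finset.sum_congr rfl fun j _ => hesymm j (f j)
  -- main argument
  rw [← LinearMap.ker_eq_bot, LinearMap.ker_eq_bot']
  intro t ht
  set f := e t with hf
  have ht' : ∀ z : A, ∑ j ∈ f.support, f j * D (c j) z = 0 := by
    intro z
    have h0 := ht
    rw [← e.symm_apply_apply t, ← hf, hrep, map_sum] at h0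
    have h1 := congrArg (fun g : Module.End ℤ A => g z) h0
    simpa only [LinearMap.sum_apply, TensorProduct.lift.tmul, LinearMap.compl₁₂_apply,
      LinearMap.mul_apply', AlgHom.toLinearMap_apply, Module.End.mul_apply,
      Algebra.coe_lmul_eq_mul, LinearMap.zero_apply] using h1
  have main : ∀ (m : ℕ) (j : (Σ n : ℕ, {a // a ∈ S n})), j.1 = m → f j = 0 := by
    intro m
    induction m using Nat.strong_induction_on with
    | _ m ih =>
      rintro ⟨k, b0⟩ hk
      subst hk
      have hb0A : (b0 : A) ∈ 𝒜 k := hSsub k b0.2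
      by_cases hmem : (⟨k, b0⟩ : Σ n : ℕ, {a // a ∈ S n}) ∈ f.support
      · have hz' : f ⟨k, b0⟩ * D (c ⟨k, b0⟩) (b0 : A) = 0 := by
          have hzz := ht' (b0 : A)
          rw [Finset.sum_eq_single_of_mem (⟨k, b0⟩ : Σ n : ℕ, {a // a ∈ S n}) hmem ?side] at hzz
          · exact hzz
          case side =>
            rintro ⟨k', b⟩ hmem' hne
            rcases lt_trichotomy k' k with hlt | heq | hgt
            · rw [ih k' hlt ⟨k', b⟩ rfl, zero_mul]
            · subst heq
              have hbne : (b : A) ≠ (b0 : A) := by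
                intro hbb
                exact hne (by rw [Subtype.ext hbb])
              rw [hc, hDeq k' _ _ (hSsub k' b.2) hb0A,
                hSorth k' _ _ b0.2 b.2 (Ne.symm hbne), zero_smul, mul_zero]
            · rw [hc, hDhigh k' (b : A) (hSsub k' b.2) k (b0 : A) hb0A hgt, mul_zero]
        rw [hc, hDeq k _ _ hb0A hb0A, mul_smul_comm, mul_one] at hz'
        have hb0ne : (b0 : A) ≠ 0 := (hSli k).ne_zero b0
        exact htf _ _ (ne_of_gt (hpos _ hb0ne)) hz'
      · exact Finsupp.notMem_support_iff.mp hmem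
  have hf0 : f = 0 := Finsupp.ext fun j => main j.1 j rfl
  rw [← map_zero e] at hf0
  exact e.injective hf0
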